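/- Let f be a strictly positive continuous density on [0,1] that is single-peaked (increasing then decreasing) with interior mode, and define Δ(x) := (F(2x) − F(x))/x − f(x) for x ∈ (0, 1/2]. If Δ has a zero x* := max{x > 0 : Δ(x) = 0} with Δ ≥ 0 on (0, x*) and Δ ≤ 0 on (x*, 1/2], then c* := 2x* satisfies x* ≤ Mo ≤ c*, where Mo is the mode of f; in particular f is decreasing on [c*, 1] whenever c* ≥ Mo. -/

import Mathlib

/-- For a single-peaked density with (unique) interior mode `Mo`,
the zero `x*` of `Δ(x) = (F(2x) − F(x))/x − f(x)` (with `Δ ≥ 0` before and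
`Δ ≤ 0` after) satisfies `x* ≤ Mo ≤ c* := 2x*`; in particular `f` is decreasing
on `[c*, 1]` whenever `c* ≥ Mo`. -/
theorem stmt_16 (F f : ℝ → ℝ)
    (hfcont : ContinuousOn f (Set.Icc 0 1))
    (hfpos : ∀ v ∈ Set.Icc (0:ℝ) 1, 0 < f v)
    (Mo : ℝ) (hMo : Mo ∈ Set.Ioo (0:ℝ) 1)
    (hinc : StrictMonoOn f (Set.Icc 0 Mo))
    (hdec : StrictAntiOn f (Set.Icc Mo 1))
    (hF : ∀ v ∈ Set.Icc (0:ℝ) 1, HasDerivAt F (f v) v)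
    (Δ : ℝ → ℝ)
    (hΔ : ∀ x, Δ x = (F (2 * x) - F x) / x - f x)
    (xstar : ℝ) (hx : xstar ∈ Set.Ioc (0:ℝ) (1/2))
    (hzero : Δ xstar = 0)
    (hmax : ∀ x ∈ Set.Ioc (0:ℝ) (1/2), Δ x = 0 → x ≤ xstar)
    (hpos : ∀ x ∈ Set.Ioo (0:ℝ) xstar, 0 ≤ Δ x)
    (hneg : ∀ x ∈ Set.Ioc xstar (1/2 : ℝ), Δ x ≤ 0) :
    xstar ≤ Mo ∧ Mo ≤ 2 * xstar ∧
      (Mo ≤ 2 * xstar → AntitoneOn f (Set.Icc (2 * xstar) 1)) := by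
  obtain ⟨hx0, hx12⟩ := hx
  set a := xstar with ha
  set b := 2 * xstar with hb
  have hab : a < b := by simp [ha, hb]; linarith
  have hb1 : b ≤ 1 := by simp [hb]; linarith
  have ha0 : 0 ≤ a := hx0.le
  have hsub : Set.Icc a b ⊆ Set.Icc (0:ℝ) 1 := fun t ht =>
    ⟨le_trans ha0 ht.1, le_trans ht.2 hb1⟩
  -- FTC
  have hFTC : ∫ t in a..b, f t = F b - F a := by
    apply intervalIntegral.integral_eq_sub_of_hasDerivAt
    · intro t ht
      rw [Set.uIcc_of_le hab.le] at ht
      exact hF t (hsub ht)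
    · exact ((hfcont.mono hsub).intervalIntegrable_of_Icc hab.le)
  -- the zero condition gives F b - F a = a * f a
  have hkey : F b - F a = a * f a := by
    have := hzero
    rw [hΔ] at this
    have h1 : (F (2 * xstar) - F xstar) / xstar = f xstar := by linarith
    have hx0' : xstar ≠ 0 := ne_of_gt hx0
    field_simp at h1
    simp only [ha, hb]
    linarith
  have hconst : ∫ t in a..b, f a = a * f a := by
    rw [intervalIntegral.integral_const, smul_eq_mul, hb, ha]
    ring
  have hfa_mem : a ∈ Set.Icc (0:ℝ) 1 := ⟨ha0, by linarith⟩
  have hmid : a < (a + b) / 2 ∧ (a + b) / 2 < b := ⟨by linarith, by linarith⟩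
  have hmid_mem : (a + b) / 2 ∈ Set.Icc a b := ⟨hmid.1.le, hmid.2.le⟩
  have hcont_ab := hfcont.mono hsub
  -- x* ≤ Mo
  have h1 : xstar ≤ Mo := by
    by_contra h
    push_neg at h  -- Mo < a
    have hstrict : ∀ t ∈ Set.Ioc a b, f t ≤ f a := fun t ht => by
      have : f t < f a := hdec ⟨h.le, by linarith⟩ ⟨by linarith [ht.1], le_trans ht.2 hb1⟩ ht.1
      exact this.le
    have hltpt : ∃ c ∈ Set.Icc a b, f c < f a :=
      ⟨(a + b) / 2, hmid_mem, hdec ⟨h.le, by linarith⟩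
        ⟨by linarith [hmid.1], le_trans hmid.2.le hb1⟩ hmid.1⟩
    have := intervalIntegral.integral_lt_integral_of_continuousOn_of_le_of_exists_lt
      hab hcont_ab (continuousOn_const) hstrict hltpt
    rw [hFTC, hkey, hconst] at this
    exact lt_irrefl _ this
  -- Mo ≤ 2 x*
  have h2 : Mo ≤ 2 * xstar := by
    by_contra h
    push_neg at h  -- b < Mo
    have hstrict : ∀ t ∈ Set.Ioc a b, f a ≤ f t := fun t ht => by
      have : f a < f t := hinc ⟨ha0, by linarith⟩ ⟨by linarith [ht.1], by linarith [ht.2]⟩ ht.1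
      exact this.le
    have hltpt : ∃ c ∈ Set.Icc a b, f a < f c :=
      ⟨(a + b) / 2, hmid_mem, hinc ⟨ha0, by linarith⟩
        ⟨by linarith [hmid.1], by linarith [hmid.2]⟩ hmid.1⟩
    have := intervalIntegral.integral_lt_integral_of_continuousOn_of_le_of_exists_lt
      hab (continuousOn_const) hcont_ab hstrict hltpt
    rw [hFTC, hkey, hconst] at this
    exact lt_irrefl _ this
  refine ⟨h1, h2, fun hMo2 => ?_⟩
  exact (hdec.antitoneOn).mono (fun t ht => ⟨le_trans hMo2 ht.1, ht.2⟩)
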